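/- A subset S of the positive integer lattice points in Z_{>0}^t is 'prime-factorizable' (Property S) — i.e., for any two points in S, any point obtained by choosing at each prime p the exponent tuple of one or the other point lies again in S — if and only if S decomposes as a product over primes: there exist sets V_p ⊆ Z_{≥0}^t for each prime p, with V_p = {0} for all but finitely many p varying per element, such that (n_1,...,n_t) ∈ S iff for every prime p the tuple of p-adic valuations (v_p(n_1),...,v_p(n_t)) lies in V_p. -/

import Mathlib

/-- Property (S): closure of a set of tuples of positive integers under prime-wise
recombination of exponent vectors of any two of its points. -/
def PropertyS {ι : Type*} (S : Set (ι → ℕ)) : Prop :=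
  ∀ n ∈ S, ∀ n' ∈ S, ∀ c : ℕ → Bool, ∀ u : ι → ℕ,
    (∀ j, 0 < u j) →
    (∀ j, ∀ p : ℕ, p.Prime →
      (u j).factorization p =
        if c p then (n j).factorization p else (n' j).factorization p) →
    u ∈ S

/-- A set of positive lattice points satisfies Property (S) iff it decomposes as a
product over primes of local exponent sets. -/
theorem statement_0 {ι : Type*} [Fintype ι] (S : Set (ι → ℕ))
    (hpos : ∀ n ∈ S, ∀ j, 0 < n j) :
    PropertyS S ↔
      ∃ V : ℕ → Set (ι → ℕ),
        ∀ n : ι → ℕ, (∀ j, 0 < n j) →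
          (n ∈ S ↔ ∀ p : ℕ, p.Prime → (fun j => (n j).factorization p) ∈ V p) := by
  classical
  constructor
  · intro hS
    refine ⟨fun p => {e | ∃ m ∈ S, ∀ j, (m j).factorization p = e j}, ?_⟩
    intro n hn
    constructor
    · intro hnS p hp
      exact ⟨n, hnS, fun j => rfl⟩
    · intro h
      obtain ⟨w, hwS, -⟩ := h 2 Nat.prime_two
      have key : ∀ F : Finset ℕ, (∀ p ∈ F, p.Prime) →
          ∃ u ∈ S, ∀ p, p.Prime → ∀ j,
            (u j).factorization p =
              if p ∈ F then (n j).factorization p else (w j).factorization p := by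
        intro F hF
        induction F using Finset.induction_on with
        | empty => exact ⟨w, hwS, fun p hp j => by simp⟩
        | @insert q F hqF ih =>
          obtain ⟨u, huS, hu⟩ := ih (fun p hp => hF p (Finset.mem_insert_of_mem hp))
          have hq : q.Prime := hF q (Finset.mem_insert_self q F)
          obtain ⟨m, hmS, hm⟩ := h q hq
          have hupos : ∀ j, 0 < u j := hpos u huS
          have hmpos : ∀ j, 0 < m j := hpos m hmS
          set u' : ι → ℕ :=
            fun j => q ^ ((n j).factorization q) * (u j / q ^ ((u j).factorization q))
            with hu'
          have hcpos : ∀ j, 0 < u j / q ^ ((u j).factorization q) :=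
            fun j => Nat.ordCompl_pos q (hupos j).ne'
          have hu'pos : ∀ j, 0 < u' j := fun j =>
            Nat.mul_pos (Nat.pow_pos hq.pos) (hcpos j)
          have hfac : ∀ j p, p.Prime →
              (u' j).factorization p =
                if p = q then (n j).factorization q else (u j).factorization p := by
            intro j p hp
            rw [hu']
            rw [Nat.factorization_mul (pow_ne_zero _ hq.pos.ne') (hcpos j).ne']
            rw [Finsupp.add_apply, hq.factorization_pow, Nat.factorization_ordCompl]
            by_cases hpq : p = q
            · subst hpq; simp
            · simp [Finsupp.single_apply, Finsupp.erase_ne, hpq, Ne.symm hpq]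
          have hu'S : u' ∈ S := by
            refine hS m hmS u huS (fun p => decide (p = q)) u' hu'pos ?_
            intro j p hp
            rw [hfac j p hp]
            by_cases hpq : p = q
            · subst hpq; simp [hm j]
            · simp [hpq]
          refine ⟨u', hu'S, ?_⟩
          intro p hp j
          rw [hfac j p hp]
          by_cases hpq : p = q
          · subst hpq; simp
          · rw [if_neg hpq, hu p hp j]
            simp [Finset.mem_insert, hpq]
      obtain ⟨u, huS, hu⟩ := key
        (Finset.univ.biUnion fun j => (n j).primeFactors ∪ (w j).primeFactors)
        (fun p hp => by
          simp only [Finset.mem_biUnion, Finset.mem_union] at hp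
          obtain ⟨j, -, hj | hj⟩ := hp
          · exact Nat.prime_of_mem_primeFactors hj
          · exact Nat.prime_of_mem_primeFactors hj)
      have : u = n := by
        funext j
        refine Nat.eq_of_factorization_eq (hpos u huS j).ne' (hn j).ne' fun p => ?_
        by_cases hp : p.Prime
        · rw [hu p hp j]
          by_cases hmem : p ∈ Finset.univ.biUnion
              fun j => (n j).primeFactors ∪ (w j).primeFactors
          · rw [if_pos hmem]
          · rw [if_neg hmem]
            simp only [Finset.mem_biUnion, Finset.mem_union, Finset.mem_univ, true_and,
              not_exists, not_or] at hmem
            obtain ⟨h1, h2⟩ := hmem j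
            have hw0 : (w j).factorization p = 0 :=
              Finsupp.notMem_support_iff.mp (by rwa [Nat.support_factorization])
            have hn0 : (n j).factorization p = 0 :=
              Finsupp.notMem_support_iff.mp (by rwa [Nat.support_factorization])
            rw [hw0, hn0]
        · rw [Nat.factorization_eq_zero_of_not_prime _ hp,
            Nat.factorization_eq_zero_of_not_prime _ hp]
      rwa [this] at huS
  · rintro ⟨V, hV⟩
    intro n hn n' hn' c u hu hufac
    rw [hV u hu]
    intro p hp
    have h1 := (hV n (hpos n hn)).mp hn p hp
    have h2 := (hV n' (hpos n' hn')).mp hn' p hp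
    have heq : (fun j => (u j).factorization p) =
        if c p then (fun j => (n j).factorization p) else fun j => (n' j).factorization p := by
      funext j
      rw [hufac j p hp]
      cases c p <;> simp
    rw [heq]
    cases c p <;> simpa
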